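/- (Lemma 6.2, finiteness on (0,∞).) For every real μ and every α > 0, the quantity h(α) is finite; that is, the set of values μ·R_p + R_c with (R_p, R_c) ∈ R_part,out^α is nonempty and bounded above. -/

import Mathlib

open Matrix Filter
open scoped ComplexOrder

noncomputable section

/-- `Mat m n` : complex `m × n` matrix. -/
abbrev Mat (m n : ℕ) := Matrix (Fin m) (Fin n) ℂ

/-- `LD M = log det (I + M)` (real part of the determinant). -/
def LD {ι : Type*} [Fintype ι] [DecidableEq ι] (M : Matrix ι ι ℂ) : ℝ :=
  Real.log ((1 + M).det.re)

/-- real trace. -/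
def rTr {ι : Type*} [Fintype ι] (M : Matrix ι ι ℂ) : ℝ := M.trace.re

/-- `G = [H_pp  H_cp]`. -/
def Gmat {npt nct npr : ℕ} (Hpp : Mat npr npt) (Hcp : Mat npr nct) :
    Matrix (Fin npr) (Fin npt ⊕ Fin nct) ℂ :=
  fromCols Hpp Hcp

/-- `G_α = [H_pp  H_cp/√α]`. -/
def Galpha {npt nct npr : ℕ} (Hpp : Mat npr npt) (Hcp : Mat npr nct) (α : ℝ) :
    Matrix (Fin npr) (Fin npt ⊕ Fin nct) ℂ :=
  fromCols Hpp (((Real.sqrt α : ℂ))⁻¹ • Hcp)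

/-- The achievable region `R_in`. -/
def Rin {npt nct npr ncr : ℕ} (Hpp : Mat npr npt) (Hcp : Mat npr nct) (Hcc : Mat ncr nct)
    (Pp Pc : ℝ) : Set (ℝ × ℝ) :=
  closure (convexHull ℝ
    {R : ℝ × ℝ | 0 ≤ R.1 ∧ 0 ≤ R.2 ∧
      ∃ (Sp : Mat npt npt) (Scp Scc : Mat nct nct) (Q : Mat npt nct),
        Sp.PosSemidef ∧ Scp.PosSemidef ∧ Scc.PosSemidef ∧
        (fromBlocks Sp Q Qᴴ Scp).PosSemidef ∧
        rTr Sp ≤ Pp ∧ rTr Scp + rTr Scc ≤ Pc ∧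
        R.1 ≤ LD (Gmat Hpp Hcp * fromBlocks Sp Q Qᴴ Scp * (Gmat Hpp Hcp)ᴴ
                  + Hcp * Scc * Hcpᴴ)
              - LD (Hcp * Scc * Hcpᴴ) ∧
        R.2 ≤ LD (Hcc * Scc * Hccᴴ)})

/-- The partial outer bound region `R_part,out^α`. -/
def Rpart {npt nct npr ncr : ℕ} (Hpp : Mat npr npt) (Hcp : Mat npr nct) (Hcc : Mat ncr nct)
    (Pp Pc : ℝ) (α : ℝ) : Set (ℝ × ℝ) :=
  closure (convexHull ℝ
    {R : ℝ × ℝ | 0 ≤ R.1 ∧ 0 ≤ R.2 ∧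
      ∃ (Qp : Matrix (Fin npt ⊕ Fin nct) (Fin npt ⊕ Fin nct) ℂ) (Scc : Mat nct nct),
        Qp.PosSemidef ∧ Scc.PosSemidef ∧
        rTr Qp + rTr Scc ≤ Pp + α * Pc ∧
        R.1 ≤ LD (Galpha Hpp Hcp α * Qp * (Galpha Hpp Hcp α)ᴴ
                  + ((α : ℂ))⁻¹ • (Hcp * Scc * Hcpᴴ))
              - LD (((α : ℂ))⁻¹ • (Hcp * Scc * Hcpᴴ)) ∧
        R.2 ≤ LD (((α : ℂ))⁻¹ • (Hcc * Scc * Hccᴴ))})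

/-- Tuples in `R_ach,rate` (no power constraints). -/
def RachRate {npt nct npr ncr : ℕ} (Hpp : Mat npr npt) (Hcp : Mat npr nct) (Hcc : Mat ncr nct)
    (Rp Rc : ℝ) (Sp : Mat npt npt) (Scp Scc : Mat nct nct) (Q : Mat npt nct) : Prop :=
  0 ≤ Rp ∧ 0 ≤ Rc ∧ Sp.PosSemidef ∧ Scp.PosSemidef ∧ Scc.PosSemidef ∧
  (fromBlocks Sp Q Qᴴ Scp).PosSemidef ∧
  Rp ≤ LD (Gmat Hpp Hcp * fromBlocks Sp Q Qᴴ Scp * (Gmat Hpp Hcp)ᴴ + Hcp * Scc * Hcpᴴ)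
        - LD (Hcp * Scc * Hcpᴴ) ∧
  Rc ≤ LD (Hcc * Scc * Hccᴴ)

/-- The Lagrangian `L`. -/
def Lfun {npt nct : ℕ} (Pp Pc μ Rp Rc : ℝ) (Sp : Mat npt npt) (Scp Scc : Mat nct nct)
    (l1 l2 : ℝ) : ℝ :=
  μ * Rp + Rc - l1 * (rTr Sp - Pp) - l2 * (rTr Scp + rTr Scc - Pc)

/-- The Lagrangian `L₁`. -/
def L1fun {npt nct : ℕ} (Pp Pc μ Rp Rc : ℝ) (Sp : Mat npt npt) (Scp Scc : Mat nct nct)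
    (l α : ℝ) : ℝ :=
  μ * Rp + Rc - l * (rTr Sp + α * rTr Scp + α * rTr Scc - Pp - α * Pc)

/-- `K = [0  H_cc/√α]`. -/
def Kmat (npt : ℕ) {nct ncr : ℕ} (Hcc : Mat ncr nct) (α : ℝ) :
    Matrix (Fin ncr) (Fin npt ⊕ Fin nct) ℂ :=
  fromCols 0 (((Real.sqrt α : ℂ))⁻¹ • Hcc)

/-- `K̄ = [[H_pp, H_cp/√α],[0, H_cc/√α]]`. -/
def Kbar {npt nct npr ncr : ℕ} (Hpp : Mat npr npt) (Hcp : Mat npr nct) (Hcc : Mat ncr nct)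
    (α : ℝ) : Matrix (Fin npr ⊕ Fin ncr) (Fin npt ⊕ Fin nct) ℂ :=
  fromBlocks Hpp (((Real.sqrt α : ℂ))⁻¹ • Hcp) 0 (((Real.sqrt α : ℂ))⁻¹ • Hcc)

/-- The region `R₁^α` (licensed user encoded first). -/
def R1reg {npt nct npr ncr : ℕ} (Hpp : Mat npr npt) (Hcp : Mat npr nct) (Hcc : Mat ncr nct)
    (Pp Pc : ℝ) (α : ℝ) : Set (ℝ × ℝ) :=
  closure (convexHull ℝ
    {R : ℝ × ℝ | 0 ≤ R.1 ∧ 0 ≤ R.2 ∧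
      ∃ Qp Qc : Matrix (Fin npt ⊕ Fin nct) (Fin npt ⊕ Fin nct) ℂ,
        Qp.PosSemidef ∧ Qc.PosSemidef ∧ rTr Qp + rTr Qc ≤ Pp + α * Pc ∧
        R.1 ≤ LD (Galpha Hpp Hcp α * Qp * (Galpha Hpp Hcp α)ᴴ
                  + Galpha Hpp Hcp α * Qc * (Galpha Hpp Hcp α)ᴴ)
              - LD (Galpha Hpp Hcp α * Qc * (Galpha Hpp Hcp α)ᴴ) ∧
        R.2 ≤ LD (Kmat npt Hcc α * Qc * (Kmat npt Hcc α)ᴴ)})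

/-- The region `R₂^α` (cognitive user encoded first). -/
def R2reg {npt nct npr ncr : ℕ} (Hpp : Mat npr npt) (Hcp : Mat npr nct) (Hcc : Mat ncr nct)
    (Pp Pc : ℝ) (α : ℝ) : Set (ℝ × ℝ) :=
  closure (convexHull ℝ
    {R : ℝ × ℝ | 0 ≤ R.1 ∧ 0 ≤ R.2 ∧
      ∃ Qp Qc : Matrix (Fin npt ⊕ Fin nct) (Fin npt ⊕ Fin nct) ℂ,
        Qp.PosSemidef ∧ Qc.PosSemidef ∧ rTr Qp + rTr Qc ≤ Pp + α * Pc ∧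
        R.1 ≤ LD (Galpha Hpp Hcp α * Qp * (Galpha Hpp Hcp α)ᴴ) ∧
        R.2 ≤ LD (Kmat npt Hcc α * Qp * (Kmat npt Hcc α)ᴴ
                  + Kmat npt Hcc α * Qc * (Kmat npt Hcc α)ᴴ)
              - LD (Kmat npt Hcc α * Qp * (Kmat npt Hcc α)ᴴ)})

/-- The dirty-paper-coding region `D^α`. -/
def Dreg {npt nct npr ncr : ℕ} (Hpp : Mat npr npt) (Hcp : Mat npr nct) (Hcc : Mat ncr nct)
    (Pp Pc : ℝ) (α : ℝ) : Set (ℝ × ℝ) :=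
  closure (convexHull ℝ
    (R1reg Hpp Hcp Hcc Pp Pc α ∪ R2reg Hpp Hcp Hcc Pp Pc α))

/-- `Σ_z = [[I, Q_z],[Q_z†, I]]`. -/
def Sigmaz {npr ncr : ℕ} (Qz : Mat npr ncr) :
    Matrix (Fin npr ⊕ Fin ncr) (Fin npr ⊕ Fin ncr) ℂ :=
  fromBlocks 1 Qz Qzᴴ 1

/-- The outer bound region `R_out^{α,Σ_z}`. -/
def Rout {npt nct npr ncr : ℕ} (Hpp : Mat npr npt) (Hcp : Mat npr nct) (Hcc : Mat ncr nct)
    (Pp Pc : ℝ) (α : ℝ) (Qz : Mat npr ncr) : Set (ℝ × ℝ) :=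
  closure (convexHull ℝ
    {R : ℝ × ℝ | 0 ≤ R.1 ∧ 0 ≤ R.2 ∧
      ∃ Qp Qc : Matrix (Fin npt ⊕ Fin nct) (Fin npt ⊕ Fin nct) ℂ,
        Qp.PosSemidef ∧ Qc.PosSemidef ∧ rTr Qp + rTr Qc ≤ Pp + α * Pc ∧
        R.1 ≤ LD (Galpha Hpp Hcp α * Qp * (Galpha Hpp Hcp α)ᴴ
                  + Galpha Hpp Hcp α * Qc * (Galpha Hpp Hcp α)ᴴ)
              - LD (Galpha Hpp Hcp α * Qc * (Galpha Hpp Hcp α)ᴴ) ∧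
        R.2 ≤ Real.log ((Sigmaz Qz + Kbar Hpp Hcp Hcc α * Qc * (Kbar Hpp Hcp Hcc α)ᴴ).det.re)
              - Real.log ((Sigmaz Qz).det.re)})


section Helpers
variable {ι : Type*} [Fintype ι]

lemma psd_smul_real {M : Matrix ι ι ℂ} (hM : M.PosSemidef) {r : ℝ} (hr : 0 ≤ r) :
    ((r : ℂ) • M).PosSemidef := by
  constructor
  · have : ((r:ℂ) • M)ᴴ = (starRingEnd ℂ (r:ℂ)) • Mᴴ := conjTranspose_smul _ _
    rw [Matrix.IsHermitian, this, hM.1.eq, Complex.conj_ofReal]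
  · exact (hM.smul (a := (r:ℂ)) (by exact_mod_cast hr)).2

lemma trace_self_mul_conj_re (M : Matrix ι ι ℂ) :
    (M * Mᴴ).trace.re = ∑ i, ∑ j, Complex.normSq (M i j) := by
  simp only [Matrix.trace, Matrix.diag, Matrix.mul_apply, Matrix.conjTranspose_apply]
  rw [Complex.re_sum]
  congr 1
  ext i
  rw [Complex.re_sum]
  congr 1
  ext j
  rw [(by rfl : star (M i j) = (starRingEnd ℂ) (M i j)), Complex.mul_conj]
  simp

lemma rTr_conjTranspose_mul_self (B : Matrix ι ι ℂ) :
    (Bᴴ * B).trace.re = ∑ j, ∑ i, Complex.normSq (B i j) := by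
  simp only [Matrix.trace, Matrix.diag, Matrix.mul_apply, Matrix.conjTranspose_apply]
  rw [Complex.re_sum]
  congr 1
  ext j
  rw [Complex.re_sum]
  congr 1
  ext i
  rw [mul_comm, (by rfl : star (B i j) = (starRingEnd ℂ) (B i j)), Complex.mul_conj]
  simp

lemma rTr_nonneg' {M : Matrix ι ι ℂ} (hM : M.PosSemidef) : 0 ≤ M.trace.re := by
  classical
  obtain ⟨B, rfl⟩ : ∃ B : Matrix ι ι ℂ, M = Bᴴ * B := by
    open MatrixOrder in exact CStarAlgebra.nonneg_iff_eq_star_mul_self.mp hM.nonneg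
  rw [rTr_conjTranspose_mul_self]
  exact Finset.sum_nonneg fun j _ => Finset.sum_nonneg fun i _ => Complex.normSq_nonneg _

lemma rTr_psd_mul_le {P Q : Matrix ι ι ℂ} (hP : P.PosSemidef) (hQ : Q.PosSemidef) :
    (P * Q).trace.re ≤ P.trace.re * Q.trace.re := by
  classical
  obtain ⟨B, rfl⟩ : ∃ B : Matrix ι ι ℂ, P = Bᴴ * B := by
    open MatrixOrder in exact CStarAlgebra.nonneg_iff_eq_star_mul_self.mp hP.nonneg
  obtain ⟨C, rfl⟩ : ∃ C : Matrix ι ι ℂ, Q = Cᴴ * C := by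
    open MatrixOrder in exact CStarAlgebra.nonneg_iff_eq_star_mul_self.mp hQ.nonneg
  have h1 : (Bᴴ * B * (Cᴴ * C)).trace = ((B * Cᴴ) * (B * Cᴴ)ᴴ).trace := by
    have e1 : Bᴴ * B * (Cᴴ * C) = Bᴴ * (B * Cᴴ * C) := by
      simp only [Matrix.mul_assoc]
    have e2 : (B * Cᴴ) * (B * Cᴴ)ᴴ = (B * Cᴴ * C) * Bᴴ := by
      rw [Matrix.conjTranspose_mul, Matrix.conjTranspose_conjTranspose]
      simp only [Matrix.mul_assoc]
    rw [e1, e2, Matrix.trace_mul_comm]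
  have hsc : ∀ (D : Matrix ι ι ℂ), (∑ j, ∑ i, Complex.normSq (D i j))
      = ∑ i, ∑ j, Complex.normSq (D i j) := fun D => Finset.sum_comm
  rw [h1, trace_self_mul_conj_re, rTr_conjTranspose_mul_self, rTr_conjTranspose_mul_self]
  calc ∑ i, ∑ j, Complex.normSq ((B * Cᴴ) i j)
      ≤ ∑ i, ∑ j, (∑ k, Complex.normSq (B i k)) * (∑ k, Complex.normSq (C j k)) := by
        refine Finset.sum_le_sum fun i _ => Finset.sum_le_sum fun j _ => ?_
        have habs : ‖(B * Cᴴ) i j‖ ≤ ∑ k, ‖B i k‖ * ‖C j k‖ := by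
          rw [Matrix.mul_apply]
          refine (norm_sum_le _ _).trans ?_
          refine Finset.sum_le_sum fun k _ => le_of_eq ?_
          rw [Matrix.conjTranspose_apply, norm_mul]
          congr 1
          simp
        have hcs := Finset.sum_mul_sq_le_sq_mul_sq Finset.univ
          (fun k => ‖B i k‖) (fun k => ‖C j k‖)
        have hns : Complex.normSq ((B * Cᴴ) i j) = (‖(B * Cᴴ) i j‖)^2 := by
          rw [Complex.sq_norm]
        rw [hns]
        calc (‖(B * Cᴴ) i j‖)^2
            ≤ (∑ k, ‖B i k‖ * ‖C j k‖)^2 := by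
              apply pow_le_pow_left₀ (norm_nonneg _) habs
          _ ≤ (∑ k, (‖B i k‖)^2) * (∑ k, (‖C j k‖)^2) := hcs
          _ = (∑ k, Complex.normSq (B i k)) * (∑ k, Complex.normSq (C j k)) := by
              simp [Complex.sq_norm]
    _ = (∑ i, ∑ k, Complex.normSq (B i k)) * (∑ j, ∑ k, Complex.normSq (C j k)) := by
        rw [Finset.sum_mul_sum]
    _ = (∑ j, ∑ i, Complex.normSq (B i j)) * (∑ j, ∑ i, Complex.normSq (C i j)) := by
        rw [hsc B, hsc C]

variable [DecidableEq ι]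

lemma det_one_add_hermitian {M : Matrix ι ι ℂ} (hM : M.IsHermitian) :
    (1 + M).det = ((∏ i, (1 + hM.eigenvalues i) : ℝ) : ℂ) := by
  set U : Matrix ι ι ℂ := (Matrix.IsHermitian.eigenvectorUnitary hM : Matrix ι ι ℂ) with hU
  have hUU : U * star U = 1 := Matrix.mem_unitaryGroup_iff.mp
    (Matrix.IsHermitian.eigenvectorUnitary hM).2
  have h1 : (1 : Matrix ι ι ℂ) + M
      = U * (1 + Matrix.diagonal ((RCLike.ofReal : ℝ → ℂ) ∘ hM.eigenvalues)) * star U := by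
    rw [Matrix.mul_add, Matrix.add_mul, Matrix.mul_one, hUU]
    congr 1
    exact hM.spectral_theorem
  rw [h1, Matrix.det_mul, Matrix.det_mul]
  have hdetU : U.det * (star U).det = 1 := by
    rw [← Matrix.det_mul, hUU, Matrix.det_one]
  have : U.det * (1 + Matrix.diagonal ((RCLike.ofReal : ℝ → ℂ) ∘ hM.eigenvalues)).det * (star U).det
      = (1 + Matrix.diagonal ((RCLike.ofReal : ℝ → ℂ) ∘ hM.eigenvalues)).det * (U.det * (star U).det) := by
    ring
  rw [this, hdetU, mul_one]
  have hdiag : (1 : Matrix ι ι ℂ) + Matrix.diagonal ((RCLike.ofReal : ℝ → ℂ) ∘ hM.eigenvalues)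
      = Matrix.diagonal (fun i => 1 + (hM.eigenvalues i : ℂ)) := by
    rw [← Matrix.diagonal_one, Matrix.diagonal_add]
    rfl
  rw [hdiag, Matrix.det_diagonal]
  push_cast
  rfl

lemma trace_hermitian {M : Matrix ι ι ℂ} (hM : M.IsHermitian) :
    M.trace = ((∑ i, hM.eigenvalues i : ℝ) : ℂ) := by
  set U : Matrix ι ι ℂ := (Matrix.IsHermitian.eigenvectorUnitary hM : Matrix ι ι ℂ) with hU
  have hUU : star U * U = 1 := Matrix.mem_unitaryGroup_iff'.mp
    (Matrix.IsHermitian.eigenvectorUnitary hM).2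
  calc M.trace = (U * Matrix.diagonal ((RCLike.ofReal : ℝ → ℂ) ∘ hM.eigenvalues) * star U).trace := by
        exact congrArg Matrix.trace hM.spectral_theorem
    _ = (star U * (U * Matrix.diagonal ((RCLike.ofReal : ℝ → ℂ) ∘ hM.eigenvalues))).trace := by
        rw [Matrix.trace_mul_comm]
    _ = ((1 : Matrix ι ι ℂ) * Matrix.diagonal ((RCLike.ofReal : ℝ → ℂ) ∘ hM.eigenvalues)).trace := by
        rw [← Matrix.mul_assoc, hUU]
    _ = ((∑ i, hM.eigenvalues i : ℝ) : ℂ) := by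
        rw [Matrix.one_mul, Matrix.trace_diagonal]
        push_cast
        rfl

lemma LD_nonneg' {M : Matrix ι ι ℂ} (hM : M.PosSemidef) :
    0 ≤ Real.log ((1 + M).det.re) := by
  rw [det_one_add_hermitian hM.1, Complex.ofReal_re]
  refine Real.log_nonneg ?_
  calc (1:ℝ) = ∏ _i : ι, (1:ℝ) := by simp
    _ ≤ ∏ i, (1 + hM.1.eigenvalues i) := Finset.prod_le_prod
        (fun i _ => zero_le_one) (fun i _ => by linarith [hM.eigenvalues_nonneg i])

lemma LD_le_rTr' {M : Matrix ι ι ℂ} (hM : M.PosSemidef) :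
    Real.log ((1 + M).det.re) ≤ M.trace.re := by
  rw [det_one_add_hermitian hM.1, Complex.ofReal_re, trace_hermitian hM.1, Complex.ofReal_re]
  have hpos : ∀ i ∈ Finset.univ, (0:ℝ) < 1 + hM.1.eigenvalues i := fun i _ => by
    linarith [hM.eigenvalues_nonneg i]
  rw [Real.log_prod (fun i hi => ne_of_gt (hpos i hi))]
  refine Finset.sum_le_sum fun i hi => ?_
  have := Real.log_le_sub_one_of_pos (hpos i hi)
  linarith


lemma sandwich_bound {ι : Type*} [Fintype ι] {κ : Type*} [Fintype κ] (A : Matrix κ ι ℂ)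
    {Q : Matrix ι ι ℂ} (hQ : Q.PosSemidef) :
    (A * Q * Aᴴ).trace.re ≤ (Aᴴ * A).trace.re * Q.trace.re := by
  rw [Matrix.trace_mul_cycle A Q Aᴴ]
  exact rTr_psd_mul_le (posSemidef_conjTranspose_mul_self A) hQ

end Helpers

theorem statement9 {npt nct npr ncr : ℕ}
    (hnpt : 0 < npt) (hnct : 0 < nct) (hnpr : 0 < npr) (hncr : 0 < ncr)
    (Hpp : Mat npr npt) (Hcp : Mat npr nct) (Hcc : Mat ncr nct)
    (Pp Pc : ℝ) (hPp : 0 < Pp) (hPc : 0 < Pc) (μ : ℝ) (α : ℝ) (hα : 0 < α) :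
    ((fun R : ℝ × ℝ => μ * R.1 + R.2) '' Rpart Hpp Hcp Hcc Pp Pc α).Nonempty ∧
    BddAbove ((fun R : ℝ × ℝ => μ * R.1 + R.2) '' Rpart Hpp Hcp Hcc Pp Pc α) := by
  classical
  have hP : 0 < Pp + α * Pc := by positivity
  set A := Galpha Hpp Hcp α with hA
  set cA : ℝ := (Aᴴ * A).trace.re with hcA
  set cB : ℝ := (Hcpᴴ * Hcp).trace.re with hcB
  set cC : ℝ := (Hccᴴ * Hcc).trace.re with hcC
  have hcA0 : 0 ≤ cA := rTr_nonneg' (posSemidef_conjTranspose_mul_self A)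
  have hcB0 : 0 ≤ cB := rTr_nonneg' (posSemidef_conjTranspose_mul_self Hcp)
  have hcC0 : 0 ≤ cC := rTr_nonneg' (posSemidef_conjTranspose_mul_self Hcc)
  set C : ℝ := (cA + α⁻¹ * cB + α⁻¹ * cC) * (Pp + α * Pc) with hCdef
  have hC0 : 0 ≤ C := by
    have h1 : 0 ≤ α⁻¹ := inv_nonneg.mpr hα.le
    have : 0 ≤ cA + α⁻¹ * cB + α⁻¹ * cC := by positivity
    exact mul_nonneg this hP.le
  have hαinv : ((α : ℂ))⁻¹ = (((α⁻¹ : ℝ)) : ℂ) := by push_cast; ring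
  -- the base set is contained in a box
  have key : {R : ℝ × ℝ | 0 ≤ R.1 ∧ 0 ≤ R.2 ∧
      ∃ (Qp : Matrix (Fin npt ⊕ Fin nct) (Fin npt ⊕ Fin nct) ℂ) (Scc : Mat nct nct),
        Qp.PosSemidef ∧ Scc.PosSemidef ∧
        rTr Qp + rTr Scc ≤ Pp + α * Pc ∧
        R.1 ≤ LD (Galpha Hpp Hcp α * Qp * (Galpha Hpp Hcp α)ᴴ
                  + ((α : ℂ))⁻¹ • (Hcp * Scc * Hcpᴴ))
              - LD (((α : ℂ))⁻¹ • (Hcp * Scc * Hcpᴴ)) ∧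
        R.2 ≤ LD (((α : ℂ))⁻¹ • (Hcc * Scc * Hccᴴ))}
      ⊆ Set.Icc (0:ℝ) C ×ˢ Set.Icc (0:ℝ) C := by
    rintro ⟨R1, R2⟩ ⟨h10, h20, Qp, Scc, hQp, hScc, htr, hR1, hR2⟩
    have hQtr : 0 ≤ Qp.trace.re := rTr_nonneg' hQp
    have hStr : 0 ≤ Scc.trace.re := rTr_nonneg' hScc
    have htr' : rTr Qp + rTr Scc ≤ Pp + α * Pc := htr
    have hQle : Qp.trace.re ≤ Pp + α * Pc := by
      have : rTr Qp = Qp.trace.re := rfl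
      have h2 : rTr Scc = Scc.trace.re := rfl
      linarith [htr']
    have hSle : Scc.trace.re ≤ Pp + α * Pc := by
      have : rTr Qp = Qp.trace.re := rfl
      have h2 : rTr Scc = Scc.trace.re := rfl
      linarith [htr']
    have hXpsd : (A * Qp * Aᴴ).PosSemidef := hQp.mul_mul_conjTranspose_same A
    have hYpsd : (((α : ℂ))⁻¹ • (Hcp * Scc * Hcpᴴ)).PosSemidef := by
      rw [hαinv]
      exact psd_smul_real (hScc.mul_mul_conjTranspose_same Hcp) (inv_nonneg.mpr hα.le)
    have hY'psd : (((α : ℂ))⁻¹ • (Hcc * Scc * Hccᴴ)).PosSemidef := by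
      rw [hαinv]
      exact psd_smul_real (hScc.mul_mul_conjTranspose_same Hcc) (inv_nonneg.mpr hα.le)
    -- trace bounds
    have hXtr : (A * Qp * Aᴴ).trace.re ≤ cA * (Pp + α * Pc) := by
      calc (A * Qp * Aᴴ).trace.re ≤ cA * Qp.trace.re := sandwich_bound A hQp
        _ ≤ cA * (Pp + α * Pc) := mul_le_mul_of_nonneg_left hQle hcA0
    have hYtr : (((α : ℂ))⁻¹ • (Hcp * Scc * Hcpᴴ)).trace.re ≤ α⁻¹ * cB * (Pp + α * Pc) := by
      rw [hαinv, Matrix.trace_smul]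
      have hre : ((((α⁻¹:ℝ)) : ℂ) • (Hcp * Scc * Hcpᴴ).trace).re
          = α⁻¹ * (Hcp * Scc * Hcpᴴ).trace.re := by
        simp [Complex.smul_re]
      rw [hre]
      have h1 : (Hcp * Scc * Hcpᴴ).trace.re ≤ cB * Scc.trace.re := sandwich_bound Hcp hScc
      have h2 : cB * Scc.trace.re ≤ cB * (Pp + α * Pc) := mul_le_mul_of_nonneg_left hSle hcB0
      have h3 : (0:ℝ) ≤ α⁻¹ := inv_nonneg.mpr hα.le
      calc α⁻¹ * (Hcp * Scc * Hcpᴴ).trace.re ≤ α⁻¹ * (cB * (Pp + α * Pc)) := by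
            exact mul_le_mul_of_nonneg_left (le_trans h1 h2) h3
        _ = α⁻¹ * cB * (Pp + α * Pc) := by ring
    have hY'tr : (((α : ℂ))⁻¹ • (Hcc * Scc * Hccᴴ)).trace.re ≤ α⁻¹ * cC * (Pp + α * Pc) := by
      rw [hαinv, Matrix.trace_smul]
      have hre : ((((α⁻¹:ℝ)) : ℂ) • (Hcc * Scc * Hccᴴ).trace).re
          = α⁻¹ * (Hcc * Scc * Hccᴴ).trace.re := by
        simp [Complex.smul_re]
      rw [hre]
      have h1 : (Hcc * Scc * Hccᴴ).trace.re ≤ cC * Scc.trace.re := sandwich_bound Hcc hScc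
      have h2 : cC * Scc.trace.re ≤ cC * (Pp + α * Pc) := mul_le_mul_of_nonneg_left hSle hcC0
      have h3 : (0:ℝ) ≤ α⁻¹ := inv_nonneg.mpr hα.le
      calc α⁻¹ * (Hcc * Scc * Hccᴴ).trace.re ≤ α⁻¹ * (cC * (Pp + α * Pc)) := by
            exact mul_le_mul_of_nonneg_left (le_trans h1 h2) h3
        _ = α⁻¹ * cC * (Pp + α * Pc) := by ring
    -- bound R1
    have hR1C : R1 ≤ C := by
      have hLDY : 0 ≤ LD (((α : ℂ))⁻¹ • (Hcp * Scc * Hcpᴴ)) := LD_nonneg' hYpsd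
      have hsum : (A * Qp * Aᴴ + ((α : ℂ))⁻¹ • (Hcp * Scc * Hcpᴴ)).PosSemidef :=
        hXpsd.add hYpsd
      have hLDsum : LD (A * Qp * Aᴴ + ((α : ℂ))⁻¹ • (Hcp * Scc * Hcpᴴ))
          ≤ (A * Qp * Aᴴ + ((α : ℂ))⁻¹ • (Hcp * Scc * Hcpᴴ)).trace.re := LD_le_rTr' hsum
      have htradd : (A * Qp * Aᴴ + ((α : ℂ))⁻¹ • (Hcp * Scc * Hcpᴴ)).trace.re
          = (A * Qp * Aᴴ).trace.re + (((α : ℂ))⁻¹ • (Hcp * Scc * Hcpᴴ)).trace.re := by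
        rw [Matrix.trace_add, Complex.add_re]
      have hcCP : 0 ≤ α⁻¹ * cC * (Pp + α * Pc) := by
        have h3 : (0:ℝ) ≤ α⁻¹ := inv_nonneg.mpr hα.le
        positivity
      have : R1 ≤ LD (A * Qp * Aᴴ + ((α : ℂ))⁻¹ • (Hcp * Scc * Hcpᴴ))
          - LD (((α : ℂ))⁻¹ • (Hcp * Scc * Hcpᴴ)) := hR1
      have hCsplit : C = cA * (Pp + α * Pc) + α⁻¹ * cB * (Pp + α * Pc)
          + α⁻¹ * cC * (Pp + α * Pc) := by rw [hCdef]; ring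
      linarith [this, hLDY, hLDsum, htradd.le, htradd.ge, hXtr, hYtr]
    have hR2C : R2 ≤ C := by
      have hLDsum : LD (((α : ℂ))⁻¹ • (Hcc * Scc * Hccᴴ))
          ≤ (((α : ℂ))⁻¹ • (Hcc * Scc * Hccᴴ)).trace.re := LD_le_rTr' hY'psd
      have hcAP : 0 ≤ cA * (Pp + α * Pc) := mul_nonneg hcA0 hP.le
      have hcBP : 0 ≤ α⁻¹ * cB * (Pp + α * Pc) := by
        have h3 : (0:ℝ) ≤ α⁻¹ := inv_nonneg.mpr hα.le
        positivity
      have hCsplit : C = cA * (Pp + α * Pc) + α⁻¹ * cB * (Pp + α * Pc)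
          + α⁻¹ * cC * (Pp + α * Pc) := by rw [hCdef]; ring
      linarith [hR2, hLDsum, hY'tr]
    exact ⟨⟨h10, hR1C⟩, ⟨h20, hR2C⟩⟩
  have hbox : Rpart Hpp Hcp Hcc Pp Pc α ⊆ Set.Icc (0:ℝ) C ×ˢ Set.Icc (0:ℝ) C := by
    refine closure_minimal (convexHull_min key ?_) ?_
    · exact (convex_Icc 0 C).prod (convex_Icc 0 C)
    · exact isClosed_Icc.prod isClosed_Icc
  have hmem : ((0:ℝ), (0:ℝ)) ∈ Rpart Hpp Hcp Hcc Pp Pc α := by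
    apply subset_closure
    apply subset_convexHull
    refine ⟨le_refl 0, le_refl 0, 0, 0, Matrix.PosSemidef.zero, Matrix.PosSemidef.zero, ?_, ?_, ?_⟩
    · have : rTr (0 : Matrix (Fin npt ⊕ Fin nct) (Fin npt ⊕ Fin nct) ℂ) = 0 := by
        simp [rTr]
      have h2 : rTr (0 : Mat nct nct) = 0 := by simp [rTr]
      rw [this, h2]
      linarith
    · simp [LD]
    · simp [LD]
  constructor
  · exact ⟨μ * 0 + 0, ⟨((0:ℝ), (0:ℝ)), hmem, rfl⟩⟩
  · refine ⟨|μ| * C + C, ?_⟩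
    rintro y ⟨⟨R1, R2⟩, hR, rfl⟩
    obtain ⟨⟨h10, h1C⟩, h20, h2C⟩ := hbox hR
    have h1 : μ * R1 ≤ |μ| * C := by
      have ha : μ * R1 ≤ |μ| * R1 := mul_le_mul_of_nonneg_right (le_abs_self μ) h10
      have hb : |μ| * R1 ≤ |μ| * C := mul_le_mul_of_nonneg_left h1C (abs_nonneg μ)
      linarith
    simp only
    linarith


end
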